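/- arXiv:2009.04164 — 3 statements merged into one kernel-verified Lean document; each statement's English description precedes it below -/
import Mathlib

section
/- If the groups ℤ^n and ℤ^m (each equipped with the word metric coming from the standard generating set, equivalently the ℓ^∞ or ℓ^1 metric) are quasi-isometric, then n = m. -/
open Finset

/-- polynomial growth comparison -/
lemma QIZ.pow_growth {n m K : ℕ} (h : ∀ R : ℕ, 1 ≤ R → R ^ n ≤ K * R ^ m) : n ≤ m := by
  by_contra hc
  push_neg at hc
  set R := K + 1 with hR
  have h1 : (1:ℕ) ≤ R := by omega
  have h2 : R ^ (m + 1) ≤ R ^ n := Nat.pow_le_pow_right (by omega) hc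
  have := (h R h1).trans' h2
  rw [pow_succ, mul_comm] at this
  have hpos : 0 < R ^ m := Nat.pow_pos (by omega)
  have := Nat.le_of_mul_le_mul_right this hpos
  omega

lemma QIZ.card_ball {m : ℕ} (c : Fin m → ℤ) (R : ℕ) :
    (Fintype.piFinset (fun i => Finset.Icc (c i - R) (c i + R))).card = (2 * R + 1) ^ m := by
  rw [Fintype.card_piFinset]
  have : ∀ i : Fin m, (Finset.Icc (c i - R) (c i + R)).card = 2 * R + 1 := by
    intro i
    rw [Int.card_Icc]
    omega
  simp [this]

lemma QIZ.mem_ball {m : ℕ} {x c : Fin m → ℤ} {R : ℕ} (h : dist x c ≤ (R : ℝ)) :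
    x ∈ Fintype.piFinset (fun i => Finset.Icc (c i - R) (c i + R)) := by
  rw [Fintype.mem_piFinset]
  intro i
  have h1 : dist (x i) (c i) ≤ (R : ℝ) := (dist_le_pi_dist x c i).trans h
  rw [Int.dist_eq] at h1
  rw [Finset.mem_Icc]
  have h2 : |x i - c i| ≤ (R : ℤ) := by
    exact_mod_cast (by push_cast; exact h1 : ((|x i - c i| : ℤ) : ℝ) ≤ (R : ℝ))
  rw [abs_le] at h2
  omega

lemma QIZ.dist_le {m : ℕ} {x c : Fin m → ℤ} {R : ℕ}
    (h : ∀ i, x i ∈ Finset.Icc (c i - R) (c i + R)) : dist x c ≤ (R : ℝ) := by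
  rw [dist_pi_le_iff (by positivity)]
  intro i
  have h1 := h i
  rw [Finset.mem_Icc] at h1
  rw [Int.dist_eq]
  have h2 : |x i - c i| ≤ (R : ℤ) := by rw [abs_le]; omega
  calc |((x i : ℝ)) - c i| = ((|x i - c i| : ℤ) : ℝ) := by push_cast; ring_nf
    _ ≤ (R : ℝ) := by exact_mod_cast h2

lemma QIZ.one_le_dist {m : ℕ} {x y : Fin m → ℤ} (h : x ≠ y) : (1:ℝ) ≤ dist x y := by
  obtain ⟨i, hi⟩ := Function.ne_iff.mp h
  refine le_trans ?_ (dist_le_pi_dist x y i)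
  rw [Int.dist_eq]
  have h2 : (1:ℤ) ≤ |x i - y i| := Int.one_le_abs (sub_ne_zero.mpr hi)
  calc (1:ℝ) = ((1:ℤ):ℝ) := by norm_num
    _ ≤ ((|x i - y i| : ℤ) : ℝ) := by exact_mod_cast h2
    _ = |((x i : ℝ)) - y i| := by push_cast; ring_nf

lemma QIZ.dir1 (n m : ℕ) (f : (Fin n → ℤ) → (Fin m → ℤ)) (l C : ℝ)
    (hl : 1 ≤ l) (hC : 0 ≤ C)
    (hlow : ∀ x y, dist x y / l - C ≤ dist (f x) (f y))
    (hup : ∀ x y, dist (f x) (f y) ≤ l * dist x y + C) :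
    n ≤ m := by
  classical
  have hl0 : (0:ℝ) < l := lt_of_lt_of_le one_pos hl
  set Ln : ℕ := ⌈l⌉₊ with hLn
  set Cn : ℕ := ⌈C⌉₊ with hCn
  have hlLn : l ≤ (Ln : ℝ) := Nat.le_ceil l
  have hCCn : C ≤ (Cn : ℝ) := Nat.le_ceil C
  obtain ⟨k, hkC⟩ : ∃ k : ℕ, l * C < (k : ℝ) := by
    refine ⟨⌈l * C⌉₊ + 1, ?_⟩
    push_cast
    linarith [Nat.le_ceil (l * C)]
  set φ : (Fin n → ℤ) → (Fin m → ℤ) := fun x => f (fun i => (k : ℤ) * x i) with hφ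
  have hk0 : (0:ℤ) ≤ (k:ℤ) := Int.ofNat_nonneg k
  -- injectivity of φ
  have hinj : Function.Injective φ := by
    intro x y hxy
    by_contra hne
    obtain ⟨i, hi⟩ := Function.ne_iff.mp hne
    have h1 : (k : ℝ) ≤ dist (fun i => (k:ℤ) * x i) (fun i => (k:ℤ) * y i) := by
      refine le_trans ?_ (dist_le_pi_dist _ _ i)
      rw [Int.dist_eq]
      have h2 : (k : ℤ) ≤ |(k:ℤ) * x i - (k:ℤ) * y i| := by
        rw [show (k:ℤ) * x i - (k:ℤ) * y i = (k:ℤ) * (x i - y i) by ring, abs_mul,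
          abs_of_nonneg hk0]
        nlinarith [Int.one_le_abs (sub_ne_zero.mpr hi)]
      have h3 : ((k:ℤ):ℝ) ≤ ((|(k:ℤ) * x i - (k:ℤ) * y i| : ℤ) : ℝ) := by exact_mod_cast h2
      push_cast at h3 ⊢
      convert h3 using 2 <;> ring
    have h3 := hlow (fun i => (k:ℤ) * x i) (fun i => (k:ℤ) * y i)
    rw [show f (fun i => (k:ℤ) * x i) = φ x from rfl, show f (fun i => (k:ℤ) * y i) = φ y from rfl,
      hxy, dist_self] at h3
    have h4 : (k:ℝ) / l - C ≤ 0 := le_trans (by gcongr) h3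
    have h5 : (k:ℝ) / l ≤ C := by linarith
    have h6 : (k:ℝ) ≤ C * l := (div_le_iff₀ hl0).mp h5
    nlinarith
  -- counting
  set E : ℕ := 2 * (Ln * k) + 2 * Cn + 1 with hE
  have key : ∀ R : ℕ, 1 ≤ R → R ^ n ≤ E ^ m * R ^ m := by
    intro R hR
    set R' : ℕ := Ln * (k * R) + Cn with hR'
    set S := Fintype.piFinset (fun i : Fin n => Finset.Icc ((0:ℤ) - R) ((0:ℤ) + R)) with hS
    set T := Fintype.piFinset (fun i : Fin m => Finset.Icc (f 0 i - R') (f 0 i + R')) with hT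
    have hmaps : ∀ x ∈ S, φ x ∈ T := by
      intro x hx
      rw [hS, Fintype.mem_piFinset] at hx
      have hx0 : dist (fun i => (k:ℤ) * x i) (0 : Fin n → ℤ) ≤ ((k * R : ℕ) : ℝ) := by
        apply QIZ.dist_le
        intro i
        have hxi := hx i
        rw [Finset.mem_Icc] at hxi ⊢
        simp only [Pi.zero_apply]
        push_cast
        constructor
        · nlinarith [mul_nonneg hk0 (show (0:ℤ) ≤ x i + (R:ℤ) by omega)]
        · nlinarith [mul_nonneg hk0 (show (0:ℤ) ≤ (R:ℤ) - x i by omega)]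
      have h1 : dist (φ x) (f 0) ≤ ((R' : ℕ) : ℝ) := by
        calc dist (φ x) (f 0) ≤ l * dist (fun i => (k:ℤ) * x i) (0 : Fin n → ℤ) + C := hup _ _
          _ ≤ (Ln:ℝ) * ((k * R : ℕ) : ℝ) + Cn := by
              gcongr
          _ = ((R' : ℕ) : ℝ) := by rw [hR']; push_cast; ring
      exact QIZ.mem_ball h1
    have hcard : (2 * R + 1) ^ n ≤ (2 * R' + 1) ^ m := by
      have h0 : S.card ≤ T.card := Finset.card_le_card_of_injOn φ hmaps (hinj.injOn)
      have hcS : S.card = (2 * R + 1) ^ n := QIZ.card_ball (fun _ => (0:ℤ)) R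
      have hcT : T.card = (2 * R' + 1) ^ m := QIZ.card_ball (f 0) R'
      rw [hcS, hcT] at h0
      exact h0
    calc R ^ n ≤ (2 * R + 1) ^ n := Nat.pow_le_pow_left (by omega) n
      _ ≤ (2 * R' + 1) ^ m := hcard
      _ ≤ (E * R) ^ m := by
          apply Nat.pow_le_pow_left
          rw [hR', hE]
          nlinarith [hR]
      _ = E ^ m * R ^ m := by rw [mul_pow]
  exact QIZ.pow_growth key

lemma QIZ.dir2 (n m : ℕ) (f : (Fin n → ℤ) → (Fin m → ℤ)) (l C : ℝ)
    (hl : 1 ≤ l) (hC : 0 ≤ C)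
    (hlow : ∀ x y, dist x y / l - C ≤ dist (f x) (f y))
    (hdense : ∀ y, ∃ x, dist (f x) y ≤ C) :
    m ≤ n := by
  classical
  have hl0 : (0:ℝ) < l := lt_of_lt_of_le one_pos hl
  set Ln : ℕ := ⌈l⌉₊ with hLn
  set Cn : ℕ := ⌈C⌉₊ with hCn
  set Dn : ℕ := ⌈dist (f 0) (0 : Fin m → ℤ)⌉₊ with hDn
  have hlLn : l ≤ (Ln : ℝ) := Nat.le_ceil l
  have hCCn : C ≤ (Cn : ℝ) := Nat.le_ceil C
  have hDDn : dist (f 0) (0 : Fin m → ℤ) ≤ (Dn : ℝ) := Nat.le_ceil _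
  set g : (Fin m → ℤ) → (Fin n → ℤ) := fun y => (hdense y).choose with hg
  have hgC : ∀ y, dist (f (g y)) y ≤ C := fun y => (hdense y).choose_spec
  set B0 : ℕ := (2 * (2 * Cn) + 1) ^ m with hB0
  set F : ℕ := 2 * (Ln * (2 * Cn + Dn + 1)) + 1 with hF
  have key : ∀ R : ℕ, 1 ≤ R → R ^ m ≤ (B0 * F ^ n) * R ^ n := by
    intro R hR
    set R'' : ℕ := Ln * (2 * Cn + R + Dn) with hR''
    set S := Fintype.piFinset (fun i : Fin m => Finset.Icc ((0:ℤ) - R) ((0:ℤ) + R)) with hS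
    set T := Fintype.piFinset (fun i : Fin n => Finset.Icc ((0:ℤ) - R'') ((0:ℤ) + R'')) with hT
    -- g maps S into T
    have hmaps : ∀ y ∈ S, g y ∈ T := by
      intro y hy
      rw [hS, Fintype.mem_piFinset] at hy
      have hyR : dist y (0 : Fin m → ℤ) ≤ (R : ℝ) := QIZ.dist_le (fun i => hy i)
      have h1 : dist (f (g y)) (f 0) ≤ C + (R : ℝ) + Dn := by
        calc dist (f (g y)) (f 0) ≤ dist (f (g y)) y + dist y (0 : Fin m → ℤ)
              + dist (0 : Fin m → ℤ) (f 0) := dist_triangle4 _ _ _ _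
          _ ≤ C + (R : ℝ) + Dn := by
              have := hgC y
              rw [dist_comm (0 : Fin m → ℤ) (f 0)]
              linarith
      have h2 := hlow (g y) 0
      have h3 : dist (g y) (0 : Fin n → ℤ) ≤ l * (2 * C + R + Dn) := by
        have h4 : dist (g y) (0 : Fin n → ℤ) / l ≤ 2 * C + (R:ℝ) + Dn := by linarith
        calc dist (g y) (0 : Fin n → ℤ) = dist (g y) (0 : Fin n → ℤ) / l * l := by
              field_simp
          _ ≤ (2 * C + (R:ℝ) + Dn) * l := by
              apply mul_le_mul_of_nonneg_right h4 (le_of_lt hl0)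
          _ = l * (2 * C + R + Dn) := by ring
      have h5 : dist (g y) (0 : Fin n → ℤ) ≤ ((R'' : ℕ) : ℝ) := by
        calc dist (g y) (0 : Fin n → ℤ) ≤ l * (2 * C + R + Dn) := h3
          _ ≤ (Ln:ℝ) * (2 * Cn + R + Dn) := by
              apply mul_le_mul hlLn (by linarith) (by positivity) (by positivity)
          _ = ((R'' : ℕ) : ℝ) := by rw [hR'']; push_cast; ring
      rw [hT]
      exact QIZ.mem_ball h5
    -- fibers of g on S have size ≤ B0
    have hfib : ∀ a ∈ Finset.image g S, (S.filter (fun y => g y = a)).card ≤ B0 := by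
      intro a ha
      rw [Finset.mem_image] at ha
      obtain ⟨y0, hy0S, hy0⟩ := ha
      have hsub : S.filter (fun y => g y = a) ⊆
          Fintype.piFinset (fun i : Fin m => Finset.Icc (y0 i - (2 * Cn : ℕ)) (y0 i + (2 * Cn : ℕ))) := by
        intro y hy
        rw [Finset.mem_filter] at hy
        have hdy : dist y y0 ≤ (((2 * Cn : ℕ)) : ℝ) := by
          calc dist y y0 ≤ dist y (f a) + dist (f a) y0 := dist_triangle _ _ _
            _ ≤ C + C := by
                have h6 := hgC y
                have h7 := hgC y0
                rw [hy.2] at h6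
                rw [hy0] at h7
                rw [dist_comm y (f a)]
                linarith
            _ ≤ (((2 * Cn : ℕ)) : ℝ) := by push_cast; linarith
        exact QIZ.mem_ball hdy
      calc (S.filter (fun y => g y = a)).card
          ≤ (Fintype.piFinset (fun i : Fin m =>
              Finset.Icc (y0 i - (2 * Cn : ℕ)) (y0 i + (2 * Cn : ℕ)))).card :=
            Finset.card_le_card hsub
        _ = B0 := QIZ.card_ball y0 (2 * Cn)
    have hcount : S.card ≤ B0 * T.card := by
      calc S.card ≤ B0 * (Finset.image g S).card := Finset.card_le_mul_card_image S B0 hfib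
        _ ≤ B0 * T.card := by
            apply Nat.mul_le_mul_left
            apply Finset.card_le_card
            intro a ha
            rw [Finset.mem_image] at ha
            obtain ⟨y, hyS, hya⟩ := ha
            rw [← hya]
            exact hmaps y hyS
    have hcS : S.card = (2 * R + 1) ^ m := QIZ.card_ball (fun _ => (0:ℤ)) R
    have hcT : T.card = (2 * R'' + 1) ^ n := QIZ.card_ball (fun _ => (0:ℤ)) R''
    rw [hcS, hcT] at hcount
    calc R ^ m ≤ (2 * R + 1) ^ m := Nat.pow_le_pow_left (by omega) m
      _ ≤ B0 * (2 * R'' + 1) ^ n := hcount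
      _ ≤ B0 * (F * R) ^ n := by
          apply Nat.mul_le_mul_left
          apply Nat.pow_le_pow_left
          rw [hR'', hF]
          nlinarith [hR, Nat.mul_le_mul_left (Ln*(2*Cn+Dn)) hR, Nat.mul_le_mul_left Ln hR]
      _ = (B0 * F ^ n) * R ^ n := by rw [mul_pow]; ring
  exact QIZ.pow_growth key

/-- Quasi-isometry invariance of rank: if `ℤ^n` and `ℤ^m` (with the sup metric)
are quasi-isometric, then `n = m`. -/
theorem zn_qi_zm_rank (n m : ℕ) (f : (Fin n → ℤ) → (Fin m → ℤ)) (l C : ℝ)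
    (hl : 1 ≤ l) (hC : 0 ≤ C)
    (hlow : ∀ x y, dist x y / l - C ≤ dist (f x) (f y))
    (hup : ∀ x y, dist (f x) (f y) ≤ l * dist x y + C)
    (hdense : ∀ y, ∃ x, dist (f x) y ≤ C) :
    n = m :=
  le_antisymm (QIZ.dir1 n m f l C hl hC hlow hup) (QIZ.dir2 n m f l C hl hC hlow hdense)
end

section
/- Let X be a metric space that is quasi-isometric to ℝ, and let g : ℝ → X be a quasi-isometric embedding. Then the image of g is coarsely dense in X: there is a constant D such that every point of X lies within distance D of g(ℝ). -/
/-- Discrete intermediate value theorem: if `f` has oscillation at most `K` over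
distance `1`, and `f a ≤ r ≤ f b`, then some point of `[a,b]` maps within `K` of `r`. -/
lemma qi_discrete_ivt (f : ℝ → ℝ) (K : ℝ) (hK : 0 ≤ K)
    (hosc : ∀ u v : ℝ, |u - v| ≤ 1 → |f u - f v| ≤ K)
    (a b r : ℝ) (hab : a ≤ b) (ha : f a ≤ r) (hb : r ≤ f b) :
    ∃ t ∈ Set.Icc a b, |f t - r| ≤ K := by
  by_cases hrb : f b ≤ r
  · refine ⟨b, ⟨hab, le_refl b⟩, ?_⟩
    rw [abs_sub_le_iff]; constructor <;> linarith
  push_neg at hrb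
  set S : Set ℝ := {t | t ∈ Set.Icc a b ∧ f t ≤ r} with hS
  have haS : a ∈ S := ⟨⟨le_refl a, hab⟩, ha⟩
  have hne : S.Nonempty := ⟨a, haS⟩
  have hbdd : BddAbove S := ⟨b, fun t ht => ht.1.2⟩
  set t₀ := sSup S with ht₀
  have ht₀a : a ≤ t₀ := le_csSup hbdd haS
  have ht₀b : t₀ ≤ b := csSup_le hne fun t ht => ht.1.2
  obtain ⟨t, htS, htge⟩ := exists_lt_of_lt_csSup hne (by linarith : t₀ - 1/2 < t₀)
  set u := min (t₀ + 1/2) b with hu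
  have hut₀ : t₀ ≤ u := le_min (by linarith) ht₀b
  have hub : u ∈ Set.Icc a b := ⟨le_trans ht₀a hut₀, min_le_right _ _⟩
  have hfu : r < f u := by
    by_contra h
    push_neg at h
    have hle : u ≤ t₀ := le_csSup hbdd ⟨hub, h⟩
    have hub2 : u = b := by
      rcases le_or_gt (t₀ + 1/2) b with h1 | h1
      · exfalso
        have h2 : u = t₀ + 1/2 := min_eq_left h1
        rw [h2] at hle
        linarith
      · exact min_eq_right h1.le
    rw [hub2] at h; linarith
  have htt₀ : t ≤ t₀ := le_csSup hbdd htS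
  have htu : |t - u| ≤ 1 := by
    rw [abs_le]
    have : u ≤ t₀ + 1/2 := min_le_left _ _
    constructor <;> linarith
  have hoscK := hosc t u htu
  have h4 : f u - f t ≤ K := by
    have := (abs_le.mp hoscK).1
    linarith
  refine ⟨t, htS.1, ?_⟩
  have h3 : f t ≤ r := htS.2
  rw [abs_sub_le_iff]
  constructor <;> linarith

/-- Reversed-orientation version of `qi_discrete_ivt`. -/
lemma qi_discrete_ivt' (f : ℝ → ℝ) (K : ℝ) (hK : 0 ≤ K)
    (hosc : ∀ u v : ℝ, |u - v| ≤ 1 → |f u - f v| ≤ K)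
    (a b r : ℝ) (hab : a ≤ b) (ha : r ≤ f a) (hb : f b ≤ r) :
    ∃ t ∈ Set.Icc a b, |f t - r| ≤ K := by
  obtain ⟨t, htm, ht⟩ := qi_discrete_ivt (fun x => -(f x)) K hK
    (fun u v huv => by
      show |(-(f u)) - (-(f v))| ≤ K
      rw [show (-(f u)) - (-(f v)) = -(f u - f v) by ring, abs_neg]
      exact hosc u v huv)
    a b (-r) hab (by show -(f a) ≤ -r; linarith) (by show -r ≤ -(f b); linarith)
  refine ⟨t, htm, ?_⟩
  have ht' : |(-(f t)) - (-r)| ≤ K := ht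
  rw [show (-(f t)) - (-r) = -(f t - r) by ring, abs_neg] at ht'
  exact ht'

/-- A quasi-isometric embedding `ℝ → ℝ` is unbounded above. -/
lemma qi_not_bdd_above (f : ℝ → ℝ) (Λ c : ℝ) (hΛ : 1 ≤ Λ) (hc : 0 ≤ c)
    (hlow : ∀ s t : ℝ, |s - t| / Λ - c ≤ |f s - f t|)
    (hup : ∀ s t : ℝ, |f s - f t| ≤ Λ * |s - t| + c)
    (M : ℝ) (hM : ∀ t, f t ≤ M) : False := by
  have hΛ0 : (0:ℝ) < Λ := by linarith
  obtain ⟨K, hKdef⟩ : ∃ K : ℝ, K = Λ + c := ⟨_, rfl⟩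
  have hK : 0 ≤ K := by rw [hKdef]; positivity
  have hosc : ∀ u v : ℝ, |u - v| ≤ 1 → |f u - f v| ≤ K := by
    intro u v huv
    have := hup u v
    nlinarith [abs_nonneg (u - v)]
  obtain ⟨e, hedef⟩ : ∃ e : ℝ, e = (M - f 0) + Λ^2 * (2*K + c) + 2*K + 2*c + 1 := ⟨_, rfl⟩
  have hM0 : f 0 ≤ M := hM 0
  have he : 0 < e := by rw [hedef]; nlinarith
  obtain ⟨n, hndef⟩ : ∃ n : ℝ, n = Λ * (e + c) := ⟨_, rfl⟩
  have hn0 : 0 ≤ n := by rw [hndef]; positivity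
  have hnΛ : n / Λ - c = e := by
    rw [hndef]; field_simp; ring
  -- both f n and f (-n) lie far below f 0
  have hfar : ∀ m : ℝ, |m| = n → f m ≤ f 0 - e := by
    intro m hm
    have h1 := hlow m 0
    rw [sub_zero, hm, hnΛ] at h1
    rcases abs_cases (f m - f 0) with ⟨h2, _⟩ | ⟨h2, _⟩
    · exfalso
      have := hM m
      nlinarith
    · nlinarith
  have hfn : f n ≤ f 0 - e := hfar n (abs_of_nonneg hn0)
  have hfnn : f (-n) ≤ f 0 - e := hfar (-n) (by rw [abs_neg]; exact abs_of_nonneg hn0)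
  obtain ⟨v, hvdef⟩ : ∃ v : ℝ, v = f 0 - e/2 := ⟨_, rfl⟩
  -- find s ∈ [0, n] with f s within K of the intermediate value v
  obtain ⟨s, hsmem, hsv⟩ : ∃ s ∈ Set.Icc (0:ℝ) n, |f s - v| ≤ K :=
    qi_discrete_ivt' f K hK hosc 0 n v hn0 (by rw [hvdef]; linarith) (by linarith)
  -- and s' ∈ [-n, 0] likewise
  obtain ⟨s', hsmem', hsv'⟩ : ∃ s' ∈ Set.Icc (-n) (0:ℝ), |f s' - v| ≤ K :=
    qi_discrete_ivt f K hK hosc (-n) 0 v (by linarith) (by linarith) (by rw [hvdef]; linarith)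
  -- s and s' are both far from 0, on opposite sides
  have hfs : f s ≤ v + K := by linarith [(abs_le.mp hsv).2]
  have hfs' : f s' ≤ v + K := by linarith [(abs_le.mp hsv').2]
  have hlowK : e/2 - K - c ≤ Λ * s := by
    have h1 := hup s 0
    rw [sub_zero, abs_of_nonneg hsmem.1] at h1
    have h2 : e/2 - K ≤ |f s - f 0| := by
      rcases abs_cases (f s - f 0) with ⟨h3, _⟩ | ⟨h3, _⟩ <;> rw [h3] <;>
        [linarith [hvdef]; linarith [hvdef]]
    linarith
  have hlowK' : e/2 - K - c ≤ Λ * (-s') := by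
    have h1 := hup s' 0
    rw [sub_zero, abs_of_nonpos hsmem'.2] at h1
    have h2 : e/2 - K ≤ |f s' - f 0| := by
      rcases abs_cases (f s' - f 0) with ⟨h3, _⟩ | ⟨h3, _⟩ <;> rw [h3] <;>
        [linarith [hvdef]; linarith [hvdef]]
    linarith
  -- but f s and f s' are close, so s and s' are close: contradiction
  have hclose : |f s - f s'| ≤ 2 * K := by
    calc |f s - f s'| = |(f s - v) + (v - f s')| := by ring_nf
    _ ≤ |f s - v| + |v - f s'| := abs_add_le _ _
    _ ≤ K + K := by
        rw [abs_sub_comm v (f s')]; linarith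
    _ = 2 * K := by ring
  have hlow2 := hlow s s'
  have hss' : |s - s'| = s - s' := abs_of_nonneg (by linarith [hsmem.1, hsmem'.2])
  rw [hss'] at hlow2
  have hdiv : s - s' ≤ (2*K + c) * Λ := by
    rw [← div_le_iff₀ hΛ0]
    linarith
  have h9 : Λ * (s - s') ≤ Λ * ((2*K + c) * Λ) := mul_le_mul_of_nonneg_left hdiv hΛ0.le
  have h10 : Λ * ((2*K + c) * Λ) = Λ^2 * (2*K + c) := by ring
  rw [h10] at h9
  have h7 : e - 2*K - 2*c ≤ Λ * s + Λ * (-s') := by linarith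
  have h11 : Λ * s + Λ * (-s') = Λ * (s - s') := by ring
  rw [h11] at h7
  have h12 : e = (M - f 0) + Λ^2 * (2*K + c) + 2*K + 2*c + 1 := hedef
  linarith

/-- A quasi-isometric embedding `ℝ → ℝ` has coarsely dense image. -/
lemma qi_coarsely_dense_real (f : ℝ → ℝ) (Λ c : ℝ) (hΛ : 1 ≤ Λ) (hc : 0 ≤ c)
    (hlow : ∀ s t : ℝ, |s - t| / Λ - c ≤ |f s - f t|)
    (hup : ∀ s t : ℝ, |f s - f t| ≤ Λ * |s - t| + c)
    (r : ℝ) : ∃ t : ℝ, |f t - r| ≤ Λ + c := by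
  have hK : (0:ℝ) ≤ Λ + c := by linarith
  have hosc : ∀ u v : ℝ, |u - v| ≤ 1 → |f u - f v| ≤ Λ + c := by
    intro u v huv
    have := hup u v
    nlinarith [abs_nonneg (u - v)]
  -- f attains a value ≥ r
  have hup' : ∃ s, r ≤ f s := by
    by_contra h
    push_neg at h
    exact qi_not_bdd_above f Λ c hΛ hc hlow hup r (fun t => (h t).le)
  -- f attains a value ≤ r
  have hdn' : ∃ s, f s ≤ r := by
    by_contra h
    push_neg at h
    refine qi_not_bdd_above (fun t => -(f t)) Λ c hΛ hc ?_ ?_ (-r)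
      (fun t => by show -(f t) ≤ -r; linarith [h t])
    · intro s t
      show |s - t| / Λ - c ≤ |(-(f s)) - (-(f t))|
      rw [show (-(f s)) - (-(f t)) = -(f s - f t) by ring, abs_neg]
      exact hlow s t
    · intro s t
      show |(-(f s)) - (-(f t))| ≤ Λ * |s - t| + c
      rw [show (-(f s)) - (-(f t)) = -(f s - f t) by ring, abs_neg]
      exact hup s t
  obtain ⟨s₁, hs₁⟩ := hup'
  obtain ⟨s₂, hs₂⟩ := hdn'
  rcases le_total s₂ s₁ with h | h
  · obtain ⟨t, _, ht⟩ := qi_discrete_ivt f (Λ + c) hK hosc s₂ s₁ r h hs₂ hs₁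
    exact ⟨t, ht⟩
  · obtain ⟨t, _, ht⟩ := qi_discrete_ivt' f (Λ + c) hK hosc s₁ s₂ r h hs₁ hs₂
    exact ⟨t, ht⟩

/-- If `X` is a metric space quasi-isometric to `ℝ` (via a quasi-isometry `φ : X → ℝ`)
and `g : ℝ → X` is a quasi-isometric embedding, then the image of `g` is coarsely
dense in `X`. -/
theorem qi_line_in_quasiline_coarsely_dense (X : Type*) [MetricSpace X]
    (φ : X → ℝ) (l C : ℝ) (hl : 1 ≤ l) (hC : 0 ≤ C)
    (hφlow : ∀ x y : X, dist x y / l - C ≤ dist (φ x) (φ y))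
    (hφup : ∀ x y : X, dist (φ x) (φ y) ≤ l * dist x y + C)
    (hφdense : ∀ r : ℝ, ∃ x : X, dist (φ x) r ≤ C)
    (g : ℝ → X) (l' C' : ℝ) (hl' : 1 ≤ l') (hC' : 0 ≤ C')
    (hglow : ∀ s t : ℝ, dist s t / l' - C' ≤ dist (g s) (g t))
    (hgup : ∀ s t : ℝ, dist (g s) (g t) ≤ l' * dist s t + C') :
    ∃ D : ℝ, ∀ p : X, ∃ t : ℝ, dist (g t) p ≤ D := by
  have hl0 : (0:ℝ) < l := by linarith
  have hl'0 : (0:ℝ) < l' := by linarith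
  obtain ⟨f, hf⟩ : ∃ f : ℝ → ℝ, f = fun t => φ (g t) := ⟨_, rfl⟩
  obtain ⟨Λ, hΛdef⟩ : ∃ Λ : ℝ, Λ = l * l' := ⟨_, rfl⟩
  obtain ⟨c, hcdef⟩ : ∃ c : ℝ, c = l * C' + C := ⟨_, rfl⟩
  have hΛ : 1 ≤ Λ := by rw [hΛdef]; nlinarith
  have hΛ0 : (0:ℝ) < Λ := by linarith
  have hc : 0 ≤ c := by rw [hcdef]; positivity
  have hlow : ∀ s t : ℝ, |s - t| / Λ - c ≤ |f s - f t| := by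
    intro s t
    have h1 := hφlow (g s) (g t)
    have h2 := hglow s t
    rw [Real.dist_eq] at h2
    have h3 : dist (φ (g s)) (φ (g t)) = |f s - f t| := by rw [hf]; exact Real.dist_eq _ _
    rw [h3] at h1
    have hd0 : 0 ≤ dist (g s) (g t) := dist_nonneg
    have hF0 : 0 ≤ |f s - f t| := abs_nonneg _
    have hd1 : dist (g s) (g t) ≤ (|f s - f t| + C) * l := by
      rw [← div_le_iff₀ hl0]; linarith
    have hA : |s - t| ≤ (dist (g s) (g t) + C') * l' := by
      rw [← div_le_iff₀ hl'0]; linarith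
    rw [sub_le_iff_le_add, div_le_iff₀ hΛ0]
    rw [hΛdef, hcdef]
    have hll : 1 ≤ l * l := by nlinarith
    have h6 : 0 ≤ C' * l' * (l * l - 1) :=
      mul_nonneg (mul_nonneg hC' (by linarith)) (by linarith)
    nlinarith [mul_le_mul_of_nonneg_right hd1 hl'0.le, h6, hA]
  have hup : ∀ s t : ℝ, |f s - f t| ≤ Λ * |s - t| + c := by
    intro s t
    have h1 := hφup (g s) (g t)
    have h2 := hgup s t
    rw [Real.dist_eq] at h2
    have h3 : dist (φ (g s)) (φ (g t)) = |f s - f t| := by rw [hf]; exact Real.dist_eq _ _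
    rw [h3] at h1
    rw [hΛdef, hcdef]
    nlinarith [dist_nonneg (x := g s) (y := g t)]
  refine ⟨l * ((Λ + c) + C), fun p => ?_⟩
  obtain ⟨t, ht⟩ := qi_coarsely_dense_real f Λ c hΛ hc hlow hup (φ p)
  refine ⟨t, ?_⟩
  have h1 := hφlow (g t) p
  have h2 : dist (φ (g t)) (φ p) = |f t - φ p| := by rw [hf]; exact Real.dist_eq _ _
  rw [h2] at h1
  have h4 : dist (g t) p / l ≤ (Λ + c) + C := by linarith
  calc dist (g t) p = l * (dist (g t) p / l) := by field_simp
  _ ≤ l * ((Λ + c) + C) := mul_le_mul_of_nonneg_left h4 hl0.le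
end

section
/- Let X and Y be metric spaces with X unbounded, and equip X × Y with the metric d((x,y),(x',y')) = max(d_X(x,x'), d_Y(y,y')). If X × Y is quasi-isometric to ℝ, then Y is bounded. -/
/-- Coarse connectivity of the domain of a coarsely dense quasi-isometric
embedding into `ℝ`: any two points are joined by a chain with steps of size
at most `l * (3 * C + 1)`. -/
lemma qline_chain {X Y : Type*} [MetricSpace X] [MetricSpace Y]
    (f : X × Y → ℝ) (l C : ℝ) (hl : 1 ≤ l) (hC : 0 ≤ C)
    (hlow : ∀ p q : X × Y, dist p q / l - C ≤ dist (f p) (f q))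
    (hdense : ∀ r : ℝ, ∃ p : X × Y, dist (f p) r ≤ C)
    (p q : X × Y) :
    ∃ n : ℕ, ∃ c : ℕ → X × Y, c 0 = p ∧ c n = q ∧
      ∀ i < n, dist (c i) (c (i + 1)) ≤ l * (3 * C + 1) := by
  have hl0 : (0:ℝ) < l := lt_of_lt_of_le one_pos hl
  choose g hg using hdense
  set a := f p with ha
  set b := f q with hb
  set n : ℕ := ⌈|b - a|⌉₊ + 1 with hn
  have hnpos : 0 < (n : ℝ) := by
    have : 0 < n := Nat.succ_pos _
    exact_mod_cast this
  have hab : |b - a| ≤ (n : ℝ) := by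
    calc |b - a| ≤ (⌈|b - a|⌉₊ : ℝ) := Nat.le_ceil _
      _ ≤ (n : ℝ) := by exact_mod_cast Nat.le_succ _
  set t : ℕ → ℝ := fun i => a + (b - a) * i / n with htdef
  set c : ℕ → X × Y := fun i => if i = 0 then p else if i = n then q else g (t i) with hcdef
  have hc0 : c 0 = p := by simp [hcdef]
  have hcn : c n = q := by
    have hn0 : n ≠ 0 := Nat.succ_ne_zero _
    simp [hcdef, hn0]
  have key : ∀ i ≤ n, dist (f (c i)) (t i) ≤ C := by
    intro i hi
    by_cases h0 : i = 0
    · subst h0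
      have ht0 : t 0 = a := by simp [htdef]
      rw [hc0, ht0, ← ha, dist_self]
      exact hC
    · by_cases h1 : i = n
      · subst h1
        have htn : t n = b := by
          have : (b - a) * (n : ℝ) / (n : ℝ) = b - a := by
            field_simp
          simp [htdef, this]
        rw [hcn, htn, ← hb, dist_self]
        exact hC
      · have : c i = g (t i) := by simp [hcdef, h0, h1]
        rw [this]
        exact hg (t i)
  refine ⟨n, c, hc0, hcn, ?_⟩
  intro i hi
  have h1 := key i (le_of_lt hi)
  have h2 := key (i + 1) (Nat.succ_le_of_lt hi)
  have h3 : dist (t i) (t (i + 1)) ≤ 1 := by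
    rw [Real.dist_eq]
    have he : t i - t (i + 1) = -((b - a) / n) := by
      simp only [htdef]
      push_cast
      ring
    rw [he, abs_neg, abs_div, abs_of_pos hnpos, div_le_one hnpos]
    exact hab
  have h4 : dist (f (c i)) (f (c (i + 1))) ≤ 2 * C + 1 := by
    have ht4 := dist_triangle4 (f (c i)) (t i) (t (i + 1)) (f (c (i + 1)))
    have h2' : dist (t (i + 1)) (f (c (i + 1))) ≤ C := by
      rw [dist_comm]; exact h2
    linarith
  have h5 := hlow (c i) (c (i + 1))
  have h6 : dist (c i) (c (i + 1)) / l ≤ 3 * C + 1 := by linarith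
  calc dist (c i) (c (i + 1)) = l * (dist (c i) (c (i + 1)) / l) := by
        field_simp
    _ ≤ l * (3 * C + 1) := mul_le_mul_of_nonneg_left h6 (le_of_lt hl0)

/-- Propagation of the "side" of `t0` along a contracted image of the space,
provided all its points stay `ρ`-far from `t0` in the image. -/
lemma qline_propagate {X Y : Type*} [MetricSpace X] [MetricSpace Y]
    (f : X × Y → ℝ) (l C : ℝ) (hl : 1 ≤ l) (hC : 0 ≤ C)
    (hlow : ∀ p q : X × Y, dist p q / l - C ≤ dist (f p) (f q))
    (hup : ∀ p q : X × Y, dist (f p) (f q) ≤ l * dist p q + C)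
    (hdense : ∀ r : ℝ, ∃ p : X × Y, dist (f p) r ≤ C)
    (t0 ρ : ℝ) (hρ1 : 1 ≤ ρ) (hstep : l * (l * (3 * C + 1)) + C ≤ ρ - 1)
    (F : X × Y → X × Y)
    (hF : ∀ p q : X × Y, dist (F p) (F q) ≤ dist p q)
    (hm : ∀ p : X × Y, ρ ≤ |f (F p) - t0|)
    (p q : X × Y) (h : t0 + ρ ≤ f (F p)) : t0 + ρ ≤ f (F q) := by
  have hl0 : (0:ℝ) < l := lt_of_lt_of_le one_pos hl
  obtain ⟨n, c, hc0, hcn, hcs⟩ := qline_chain f l C hl hC hlow hdense p q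
  suffices H : ∀ i, i ≤ n → t0 + ρ ≤ f (F (c i)) by
    have := H n le_rfl
    rwa [hcn] at this
  intro i
  induction i with
  | zero => intro _; rwa [hc0]
  | succ k ih =>
    intro hk
    have hk' : k < n := lt_of_lt_of_le (Nat.lt_succ_self k) hk
    have h1 : t0 + ρ ≤ f (F (c k)) := ih (le_of_lt hk')
    have h2 : dist (F (c k)) (F (c (k + 1))) ≤ l * (3 * C + 1) :=
      le_trans (hF _ _) (hcs k hk')
    have h3 : dist (f (F (c k))) (f (F (c (k + 1)))) ≤ l * (l * (3 * C + 1)) + C := by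
      have hu := hup (F (c k)) (F (c (k + 1)))
      have : l * dist (F (c k)) (F (c (k + 1))) ≤ l * (l * (3 * C + 1)) :=
        mul_le_mul_of_nonneg_left h2 (le_of_lt hl0)
      linarith
    have h4 : t0 + 1 ≤ f (F (c (k + 1))) := by
      have hd : |f (F (c k)) - f (F (c (k + 1)))| ≤ ρ - 1 := by
        rw [Real.dist_eq] at h3
        linarith
      have hab := abs_le.mp hd
      linarith [hab.1, hab.2]
    rcases le_abs.mp (hm (c (k + 1))) with h5 | h5
    · linarith
    · linarith

/-- Core contradiction: an unbounded `X`-direction and `Y`-direction together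
with a point mapping far to the positive side of `t0` is impossible. -/
lemma qline_false {X Y : Type*} [MetricSpace X] [MetricSpace Y]
    (f : X × Y → ℝ) (l C : ℝ) (hl : 1 ≤ l) (hC : 0 ≤ C)
    (hlow : ∀ p q : X × Y, dist p q / l - C ≤ dist (f p) (f q))
    (hup : ∀ p q : X × Y, dist (f p) (f q) ≤ l * dist p q + C)
    (hdense : ∀ r : ℝ, ∃ p : X × Y, dist (f p) r ≤ C)
    (x0 xs : X) (y0 ys : Y) (ρ T : ℝ)
    (hρ : ρ = l * (l * (3 * C + 1)) + C + 1) (hT : T = l * (ρ + C))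
    (hx : T ≤ dist x0 xs) (hy : T ≤ dist y0 ys)
    (hsign : f (x0, y0) + ρ ≤ f (xs, ys)) : False := by
  have hl0 : (0:ℝ) < l := lt_of_lt_of_le one_pos hl
  have hnn1 : (0:ℝ) ≤ 3 * C + 1 := by linarith
  have hnn2 : (0:ℝ) ≤ l * (3 * C + 1) := mul_nonneg (le_of_lt hl0) hnn1
  have hnn3 : (0:ℝ) ≤ l * (l * (3 * C + 1)) := mul_nonneg (le_of_lt hl0) hnn2
  have hρ1 : 1 ≤ ρ := by rw [hρ]; linarith
  have hstep : l * (l * (3 * C + 1)) + C ≤ ρ - 1 := by rw [hρ]; linarith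
  set t0 := f (x0, y0) with ht0
  -- margin: points far from the basepoint map ρ-far from t0
  have margin : ∀ p : X × Y, T ≤ dist p (x0, y0) → ρ ≤ |f p - t0| := by
    intro p hp
    have h1 := hlow p (x0, y0)
    have h2 : ρ + C ≤ dist p (x0, y0) / l := by
      rw [le_div_iff₀ hl0]
      calc (ρ + C) * l = l * (ρ + C) := mul_comm _ _
        _ = T := hT.symm
        _ ≤ dist p (x0, y0) := hp
    rw [Real.dist_eq] at h1
    linarith
  -- propagation along horizontal slices X × {y} with y far from y0
  have propX : ∀ y : Y, T ≤ dist y0 y → ∀ p q : X × Y,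
      t0 + ρ ≤ f (p.1, y) → t0 + ρ ≤ f (q.1, y) := by
    intro y hyy p q h
    refine qline_propagate f l C hl hC hlow hup hdense t0 ρ hρ1 hstep
      (fun r => (r.1, y)) ?_ ?_ p q h
    · intro r s
      rw [Prod.dist_eq]
      simp only [dist_self]
      rw [max_eq_left dist_nonneg, Prod.dist_eq]
      exact le_max_left _ _
    · intro r
      refine margin (r.1, y) ?_
      rw [Prod.dist_eq]
      calc T ≤ dist y0 y := hyy
        _ = dist y y0 := dist_comm _ _
        _ ≤ max (dist r.1 x0) (dist y y0) := le_max_right _ _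
  -- propagation along vertical slices {x} × Y with x far from x0
  have propY : ∀ x : X, T ≤ dist x0 x → ∀ p q : X × Y,
      t0 + ρ ≤ f (x, p.2) → t0 + ρ ≤ f (x, q.2) := by
    intro x hxx p q h
    refine qline_propagate f l C hl hC hlow hup hdense t0 ρ hρ1 hstep
      (fun r => (x, r.2)) ?_ ?_ p q h
    · intro r s
      rw [Prod.dist_eq]
      simp only [dist_self]
      rw [max_eq_right dist_nonneg, Prod.dist_eq]
      exact le_max_right _ _
    · intro r
      refine margin (x, r.2) ?_
      rw [Prod.dist_eq]
      calc T ≤ dist x0 x := hxx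
        _ = dist x x0 := dist_comm _ _
        _ ≤ max (dist x x0) (dist r.2 y0) := le_max_left _ _
  -- a point mapping far to the negative side of t0
  set M : ℝ := l * T + C + ρ with hM
  have hT0 : 0 ≤ T := by
    rw [hT]
    have : (0:ℝ) ≤ ρ + C := by linarith
    exact mul_nonneg (le_of_lt hl0) this
  have hM0 : 0 ≤ M := by
    rw [hM]
    have : (0:ℝ) ≤ l * T := mul_nonneg (le_of_lt hl0) hT0
    linarith
  obtain ⟨p, hp⟩ := hdense (t0 - (M + C))
  have hfp : f p ≤ t0 - M := by
    rw [Real.dist_eq] at hp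
    have := abs_le.mp hp
    linarith [this.1, this.2]
  have hdp : T ≤ dist p (x0, y0) := by
    have hu := hup p (x0, y0)
    rw [Real.dist_eq, ← ht0] at hu
    have habs : M ≤ |f p - t0| := by
      rw [abs_sub_comm]
      have h1 : M ≤ t0 - f p := by linarith
      calc M ≤ t0 - f p := h1
        _ ≤ |t0 - f p| := le_abs_self _
    have h2 : l * T < l * dist p (x0, y0) := by
      rw [hM] at habs
      linarith
    exact le_of_lt (lt_of_mul_lt_mul_left h2 (le_of_lt hl0))
  have hcase : T ≤ dist p.1 x0 ∨ T ≤ dist p.2 y0 := by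
    rw [Prod.dist_eq] at hdp
    exact le_max_iff.mp hdp
  have hpeq : (p.1, p.2) = p := Prod.mk.eta
  rcases hcase with hx2 | hy2
  · -- x-coordinate of p is far
    have hx2' : T ≤ dist x0 p.1 := by rwa [dist_comm]
    have s1 : t0 + ρ ≤ f (p.1, ys) := propX ys hy (xs, ys) (p.1, ys) hsign
    have s2 : t0 + ρ ≤ f (p.1, p.2) := propY p.1 hx2' (p.1, ys) p s1
    rw [hpeq] at s2
    linarith
  · -- y-coordinate of p is far
    have hy2' : T ≤ dist y0 p.2 := by rwa [dist_comm]
    have s1 : t0 + ρ ≤ f (xs, p.2) := propY xs hx (xs, ys) (xs, p.2) hsign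
    have s2 : t0 + ρ ≤ f (p.1, p.2) := propX p.2 hy2' (xs, p.2) p s1
    rw [hpeq] at s2
    linarith

lemma unbounded_far (Z : Type*) [MetricSpace Z]
    (hZ : ¬ Bornology.IsBounded (Set.univ : Set Z)) (r : ℝ) :
    ∃ a b : Z, r ≤ dist a b := by
  by_contra hcon
  push_neg at hcon
  exact hZ (Metric.isBounded_iff.mpr ⟨r, fun x _ y _ => le_of_lt (hcon x y)⟩)

/-- If `X` is unbounded and `X × Y` (with the max metric) is quasi-isometric
to `ℝ`, then `Y` is bounded. -/
theorem product_quasiline_second_factor_bounded (X Y : Type*)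
    [MetricSpace X] [MetricSpace Y]
    (hX : ¬ Bornology.IsBounded (Set.univ : Set X))
    (f : X × Y → ℝ) (l C : ℝ) (hl : 1 ≤ l) (hC : 0 ≤ C)
    (hlow : ∀ p q : X × Y, dist p q / l - C ≤ dist (f p) (f q))
    (hup : ∀ p q : X × Y, dist (f p) (f q) ≤ l * dist p q + C)
    (hdense : ∀ r : ℝ, ∃ p : X × Y, dist (f p) r ≤ C) :
    Bornology.IsBounded (Set.univ : Set Y) := by
  by_contra hY
  have hl0 : (0:ℝ) < l := lt_of_lt_of_le one_pos hl
  set ρ : ℝ := l * (l * (3 * C + 1)) + C + 1 with hρ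
  set T : ℝ := l * (ρ + C) with hT
  obtain ⟨x0, xs, hx⟩ := unbounded_far X hX T
  obtain ⟨y0, ys, hy⟩ := unbounded_far Y hY T
  by_cases hsign : f (x0, y0) + ρ ≤ f (xs, ys)
  · exact qline_false f l C hl hC hlow hup hdense x0 xs y0 ys ρ T hρ hT hx hy hsign
  · -- flip the sign of f
    -- first: the point (xs, ys) maps ρ-far from t0
    have hdfar : T ≤ dist (xs, ys) (x0, y0) := by
      rw [Prod.dist_eq]
      calc T ≤ dist y0 ys := hy
        _ = dist ys y0 := dist_comm _ _
        _ ≤ max (dist xs x0) (dist ys y0) := le_max_right _ _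
    have hmar : ρ ≤ |f (xs, ys) - f (x0, y0)| := by
      have h1 := hlow (xs, ys) (x0, y0)
      have h2 : ρ + C ≤ dist (xs, ys) (x0, y0) / l := by
        rw [le_div_iff₀ hl0]
        calc (ρ + C) * l = l * (ρ + C) := mul_comm _ _
          _ = T := hT.symm
          _ ≤ dist (xs, ys) (x0, y0) := hdfar
      rw [Real.dist_eq] at h1
      linarith
    rcases le_abs.mp hmar with h | h
    · exact hsign (by linarith)
    · refine qline_false (fun p => -(f p)) l C hl hC ?_ ?_ ?_ x0 xs y0 ys ρ T hρ hT hx hy ?_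
      · intro p q
        have := hlow p q
        rwa [← dist_neg_neg (f p) (f q)] at this
      · intro p q
        have := hup p q
        rwa [← dist_neg_neg (f p) (f q)] at this
      · intro r
        obtain ⟨p, hp⟩ := hdense (-r)
        refine ⟨p, ?_⟩
        have : dist (-(f p)) r = dist (f p) (-r) := by
          rw [Real.dist_eq, Real.dist_eq]
          rw [show -(f p) - r = -(f p - -r) by ring, abs_neg]
        rwa [this]
      · show -(f (x0, y0)) + ρ ≤ -(f (xs, ys))
        linarith
end
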